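/- Fix 1 ≤ p < ∞. Let (Ω, 𝒜, μ) be a probability space, V ⊆ 𝒜 a sub-σ-algebra, λ Lebesgue measure on (0,1), and π : Ω × (0,1) → Ω the first projection. Let f, g ∈ Lp(μ ⊗ λ) each be a.e. equal to a (V ⊗ Borel)-measurable function, and each nonincreasing in the second coordinate (for every ω ∈ Ω, r ↦ f(ω, r) and r ↦ g(ω, r) are nonincreasing on (0,1)). If for every Borel set B ⊆ ℝ, (μ ⊗ λ)[χ_{f⁻¹(B)} | π⁻¹(V)] = (μ ⊗ λ)[χ_{g⁻¹(B)} | π⁻¹(V)] a.e., then f = g (μ ⊗ λ)-a.e. -/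

import Mathlib

open MeasureTheory ENNReal

/-- The product of `μ` with Lebesgue measure on the interval `(0,1)`. -/
noncomputable def prodLebIoo {Ω : Type*} (mΩ : MeasurableSpace Ω) (μ : Measure Ω) :
    Measure (Ω × Set.Ioo (0 : ℝ) 1) :=
  μ.prod ((volume : Measure ℝ).comap (Subtype.val : Set.Ioo (0 : ℝ) 1 → ℝ))

namespace AEAux

/-- Lebesgue measure on the subtype `(0,1)`. -/
noncomputable def nuI : Measure (Set.Ioo (0 : ℝ) 1) :=
  (volume : Measure ℝ).comap (Subtype.val : Set.Ioo (0 : ℝ) 1 → ℝ)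

lemma me_val : MeasurableEmbedding (Subtype.val : Set.Ioo (0 : ℝ) 1 → ℝ) :=
  MeasurableEmbedding.subtype_coe measurableSet_Ioo

lemma nuI_apply (s : Set (Set.Ioo (0 : ℝ) 1)) : nuI s = volume (Subtype.val '' s) :=
  me_val.comap_apply volume s

lemma nuI_prob : IsProbabilityMeasure nuI := by
  constructor
  rw [nuI_apply, Set.image_univ, Subtype.range_coe]
  simp [Real.volume_Ioo]

instance : IsProbabilityMeasure nuI := nuI_prob

lemma nuI_le (r : Set.Ioo (0 : ℝ) 1) :
    nuI {s : Set.Ioo (0 : ℝ) 1 | (s : ℝ) ≤ (r : ℝ)} = ENNReal.ofReal (r : ℝ) := by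
  rw [nuI_apply]
  have h : Subtype.val '' {s : Set.Ioo (0 : ℝ) 1 | (s : ℝ) ≤ (r : ℝ)} = Set.Ioc 0 (r : ℝ) := by
    ext x
    simp only [Set.mem_image, Set.mem_setOf_eq, Set.mem_Ioc, Subtype.exists]
    constructor
    · rintro ⟨y, hy, hyr, rfl⟩; exact ⟨hy.1, hyr⟩
    · rintro ⟨h0, h1⟩; exact ⟨x, ⟨h0, lt_of_le_of_lt h1 r.2.2⟩, h1, rfl⟩
  rw [h, Real.volume_Ioc, sub_zero]

lemma nuI_lt (r : Set.Ioo (0 : ℝ) 1) :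
    nuI {s : Set.Ioo (0 : ℝ) 1 | (s : ℝ) < (r : ℝ)} = ENNReal.ofReal (r : ℝ) := by
  rw [nuI_apply]
  have h : Subtype.val '' {s : Set.Ioo (0 : ℝ) 1 | (s : ℝ) < (r : ℝ)} = Set.Ioo 0 (r : ℝ) := by
    ext x
    simp only [Set.mem_image, Set.mem_setOf_eq, Set.mem_Ioo, Subtype.exists]
    constructor
    · rintro ⟨y, hy, hyr, rfl⟩; exact ⟨hy.1, hyr⟩
    · rintro ⟨h0, h1⟩; exact ⟨x, ⟨h0, lt_trans h1 r.2.2⟩, h1, rfl⟩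
  rw [h, Real.volume_Ioo, sub_zero]

lemma antitone_lt_iff {u : Set.Ioo (0 : ℝ) 1 → ℝ} (hu : Antitone u) (t : ℝ)
    (r : Set.Ioo (0 : ℝ) 1) (hne : (r : ℝ) ≠ (nuI {s | t < u s}).toReal) :
    t < u r ↔ (r : ℝ) < (nuI {s | t < u s}).toReal := by
  have hfin : nuI {s | t < u s} ≠ ⊤ := measure_ne_top _ _
  constructor
  · intro h
    refine lt_of_le_of_ne ?_ hne
    have hsub : {s : Set.Ioo (0 : ℝ) 1 | (s : ℝ) ≤ (r : ℝ)} ⊆ {s | t < u s} := by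
      intro s hs
      exact lt_of_lt_of_le h (hu (Subtype.coe_le_coe.mp hs))
    have hle : ENNReal.ofReal (r : ℝ) ≤ nuI {s | t < u s} := by
      rw [← nuI_le r]; exact measure_mono hsub
    have := ENNReal.toReal_mono hfin hle
    rwa [ENNReal.toReal_ofReal (le_of_lt r.2.1)] at this
  · intro h
    by_contra hc
    have hsub : {s : Set.Ioo (0 : ℝ) 1 | t < u s} ⊆ {s | (s : ℝ) < (r : ℝ)} := by
      intro s hs
      by_contra hrs
      exact hc (lt_of_lt_of_le hs (hu (Subtype.coe_le_coe.mp (not_lt.mp hrs))))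
    have hle : nuI {s | t < u s} ≤ ENNReal.ofReal (r : ℝ) := by
      rw [← nuI_lt r]; exact measure_mono hsub
    have := ENNReal.toReal_mono (by simp) hle
    rw [ENNReal.toReal_ofReal (le_of_lt r.2.1)] at this
    exact absurd (lt_of_lt_of_le h this) (lt_irrefl _)

lemma antitone_ae_eq {u v : Set.Ioo (0 : ℝ) 1 → ℝ} (hu : Antitone u) (hv : Antitone v)
    (h : ∀ t : ℚ, nuI {s | (t : ℝ) < u s} = nuI {s | (t : ℝ) < v s}) :
    u =ᵐ[nuI] v := by
  set c : ℚ → ℝ := fun t => (nuI {s | (t : ℝ) < u s}).toReal with hc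
  have hE : nuI (⋃ t : ℚ, {r : Set.Ioo (0 : ℝ) 1 | (r : ℝ) = c t}) = 0 := by
    refine measure_iUnion_null fun t => ?_
    rw [nuI_apply]
    refine measure_mono_null (fun x hx => ?_) (measure_singleton (c t))
    rcases hx with ⟨y, hy, rfl⟩
    exact hy
  have hae : ∀ᵐ r ∂nuI, r ∉ ⋃ t : ℚ, {r : Set.Ioo (0 : ℝ) 1 | (r : ℝ) = c t} :=
    measure_eq_zero_iff_ae_notMem.mp hE
  filter_upwards [hae] with r hr
  have hner : ∀ t : ℚ, (r : ℝ) ≠ c t := by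
    intro t ht
    exact hr (Set.mem_iUnion.mpr ⟨t, ht⟩)
  have key : ∀ t : ℚ, ((t : ℝ) < u r ↔ (t : ℝ) < v r) := by
    intro t
    have h1 := antitone_lt_iff hu (t : ℝ) r (hner t)
    have h2 := antitone_lt_iff hv (t : ℝ) r (by rw [← h t]; exact hner t)
    rw [h1, h2, ← h t]
  by_contra hne
  rcases lt_or_gt_of_ne hne with h' | h'
  · obtain ⟨t, ht1, ht2⟩ := exists_rat_btwn h'
    exact absurd ((key t).mpr ht2) (not_lt.mpr (le_of_lt ht1))
  · obtain ⟨t, ht1, ht2⟩ := exists_rat_btwn h'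
    exact absurd ((key t).mp ht2) (not_lt.mpr (le_of_lt ht1))

lemma integrable_of_le_one {α : Type*} [MeasurableSpace α] {ρ : Measure α} [IsFiniteMeasure ρ]
    {h : α → ℝ} (hm : AEStronglyMeasurable h ρ) (hb : ∀ x, |h x| ≤ 1) : Integrable h ρ :=
  (integrable_const (1 : ℝ)).mono' hm (Filter.Eventually.of_forall hb)

lemma prod_mono {α β : Type*} {m m' : MeasurableSpace α} (h : m ≤ m')
    (mβ : MeasurableSpace β) : m.prod mβ ≤ m'.prod mβ :=
  sup_le_sup_right (MeasurableSpace.comap_mono h) _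

end AEAux

theorem main_aux
    {Ω : Type*} {V : MeasurableSpace Ω} [mΩ : MeasurableSpace Ω]
    (μ : Measure Ω) [IsProbabilityMeasure μ] (hV : V ≤ mΩ)
    (f g : Ω × Set.Ioo (0 : ℝ) 1 → ℝ)
    (hfV : AEStronglyMeasurable[V.prod inferInstance] f (μ.prod AEAux.nuI))
    (hgV : AEStronglyMeasurable[V.prod inferInstance] g (μ.prod AEAux.nuI))
    (hfmono : ∀ ω : Ω, Antitone fun r : Set.Ioo (0 : ℝ) 1 => f (ω, r))
    (hgmono : ∀ ω : Ω, Antitone fun r : Set.Ioo (0 : ℝ) 1 => g (ω, r))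
    (hdist : ∀ B : Set ℝ, MeasurableSet B →
      (μ.prod AEAux.nuI)[Set.indicator (f ⁻¹' B) (fun _ => (1 : ℝ)) |
          MeasurableSpace.comap Prod.fst V]
        =ᵐ[μ.prod AEAux.nuI]
          (μ.prod AEAux.nuI)[Set.indicator (g ⁻¹' B) (fun _ => (1 : ℝ)) |
            MeasurableSpace.comap Prod.fst V]) :
    f =ᵐ[μ.prod AEAux.nuI] g := by
  classical
  set ν : Measure (Set.Ioo (0 : ℝ) 1) := AEAux.nuI with hνdef
  obtain ⟨f', hf'm, hff'⟩ := hfV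
  obtain ⟨g', hg'm, hgg'⟩ := hgV
  have hVB : (V.prod (inferInstance : MeasurableSpace (Set.Ioo (0 : ℝ) 1))) ≤
      (mΩ.prod inferInstance) := AEAux.prod_mono hV _
  have hprodinst : (mΩ.prod (inferInstance : MeasurableSpace (Set.Ioo (0 : ℝ) 1))) =
      (inferInstance : MeasurableSpace (Ω × Set.Ioo (0 : ℝ) 1)) := rfl
  have hm : MeasurableSpace.comap Prod.fst V ≤
      (inferInstance : MeasurableSpace (Ω × Set.Ioo (0 : ℝ) 1)) :=
    (MeasurableSpace.comap_mono hV).trans measurable_fst.comap_le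
  haveI : SigmaFinite ((μ.prod ν).trim hm) := inferInstance
  have hf'meas : Measurable[V.prod inferInstance] f' := hf'm.measurable
  have hg'meas : Measurable[V.prod inferInstance] g' := hg'm.measurable
  have hf'full : Measurable f' := hf'meas.mono hVB le_rfl
  have hg'full : Measurable g' := hg'meas.mono hVB le_rfl
  -- indicator comparison
  have hindf : ∀ B : Set ℝ, Set.indicator (f ⁻¹' B) (fun _ => (1 : ℝ)) =ᵐ[μ.prod ν]
      Set.indicator (f' ⁻¹' B) (fun _ => (1 : ℝ)) := fun B =>
    hff'.mono fun p hp => by simp only [Set.indicator_apply, Set.mem_preimage, hp]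
  have hindg : ∀ B : Set ℝ, Set.indicator (g ⁻¹' B) (fun _ => (1 : ℝ)) =ᵐ[μ.prod ν]
      Set.indicator (g' ⁻¹' B) (fun _ => (1 : ℝ)) := fun B =>
    hgg'.mono fun p hp => by simp only [Set.indicator_apply, Set.mem_preimage, hp]
  -- main per-t statement
  have key : ∀ t : ℚ, ∀ᵐ ω ∂μ,
      ν {s | (t : ℝ) < f' (ω, s)} = ν {s | (t : ℝ) < g' (ω, s)} := by
    intro t
    -- the two V-measurable "layer-cake" functions
    set F : Ω → ℝ≥0∞ := fun ω => ν {s | (t : ℝ) < f' (ω, s)} with hF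
    set G : Ω → ℝ≥0∞ := fun ω => ν {s | (t : ℝ) < g' (ω, s)} with hG
    have hSf : MeasurableSet[V.prod inferInstance] {p : Ω × Set.Ioo (0 : ℝ) 1 | (t : ℝ) < f' p} :=
      hf'meas measurableSet_Ioi
    have hSg : MeasurableSet[V.prod inferInstance] {p : Ω × Set.Ioo (0 : ℝ) 1 | (t : ℝ) < g' p} :=
      hg'meas measurableSet_Ioi
    have hFmV : Measurable[V] F := @measurable_measure_prodMk_left Ω _ V _ ν _ _ hSf
    have hGmV : Measurable[V] G := @measurable_measure_prodMk_left Ω _ V _ ν _ _ hSg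
    have hFm : Measurable F := hFmV.mono hV le_rfl
    have hGm : Measurable G := hGmV.mono hV le_rfl
    -- generic computation for one function
    have compute : ∀ (φ φ' : Ω × Set.Ioo (0 : ℝ) 1 → ℝ)
        (hφ'meas : Measurable[V.prod inferInstance] φ')
        (hφφ' : φ =ᵐ[μ.prod ν] φ'),
        (fun x : Ω × Set.Ioo (0 : ℝ) 1 =>
            (ν {s | (t : ℝ) < φ' (x.1, s)}).toReal) =ᵐ[μ.prod ν]
          (μ.prod ν)[Set.indicator (φ ⁻¹' Set.Ioi (t : ℝ)) (fun _ => (1 : ℝ)) |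
            MeasurableSpace.comap Prod.fst V] := by
      intro φ φ' hφ'meas hφφ'
      set Φ : Ω → ℝ≥0∞ := fun ω => ν {s | (t : ℝ) < φ' (ω, s)} with hΦ
      have hSφ : MeasurableSet[V.prod inferInstance]
          {p : Ω × Set.Ioo (0 : ℝ) 1 | (t : ℝ) < φ' p} := hφ'meas measurableSet_Ioi
      have hΦmV : Measurable[V] Φ := @measurable_measure_prodMk_left Ω _ V _ ν _ _ hSφ
      have hΦm : Measurable Φ := hΦmV.mono hV le_rfl
      have hΦle : ∀ ω, |(Φ ω).toReal| ≤ 1 := by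
        intro ω
        rw [abs_of_nonneg ENNReal.toReal_nonneg]
        have h1 : Φ ω ≤ 1 := prob_le_one
        calc (Φ ω).toReal ≤ (1 : ℝ≥0∞).toReal := ENNReal.toReal_mono one_ne_top h1
          _ = 1 := by simp
      have hindφ : Set.indicator (φ ⁻¹' Set.Ioi (t : ℝ)) (fun _ => (1 : ℝ)) =ᵐ[μ.prod ν]
          Set.indicator (φ' ⁻¹' Set.Ioi (t : ℝ)) (fun _ => (1 : ℝ)) :=
        hφφ'.mono fun p hp => by simp only [Set.indicator_apply, Set.mem_preimage, hp]
      have hint : Integrable (Set.indicator (φ ⁻¹' Set.Ioi (t : ℝ)) (fun _ => (1 : ℝ)))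
          (μ.prod ν) :=
        (((integrable_const (1 : ℝ)).indicator (hVB _ hSφ))).congr hindφ.symm
      have hFcm : Measurable fun x : Ω × Set.Ioo (0 : ℝ) 1 => (Φ x.1).toReal :=
        (hΦm.ennreal_toReal).comp measurable_fst
      have hFcint : Integrable (fun x : Ω × Set.Ioo (0 : ℝ) 1 => (Φ x.1).toReal) (μ.prod ν) :=
        AEAux.integrable_of_le_one hFcm.aestronglyMeasurable fun x => hΦle x.1
      refine ae_eq_condExp_of_forall_setIntegral_eq hm hint
        (fun s _ _ => hFcint.integrableOn) ?_ ?_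
      · rintro s ⟨A, hA, rfl⟩ -
        have hA' : MeasurableSet A := hV _ hA
        have hpre : Prod.fst ⁻¹' A = A ×ˢ (Set.univ : Set (Set.Ioo (0 : ℝ) 1)) :=
          (Set.prod_univ).symm
        have hres : (μ.prod ν).restrict (A ×ˢ (Set.univ : Set (Set.Ioo (0 : ℝ) 1))) =
            (μ.restrict A).prod ν := by
          rw [← Measure.prod_restrict, Measure.restrict_univ]
        have hTm : MeasurableSet {p : Ω × Set.Ioo (0 : ℝ) 1 | (t : ℝ) < φ' p} := hVB _ hSφ
        -- LHS
        have hLHS : ∫ x in Prod.fst ⁻¹' A, (Φ x.1).toReal ∂(μ.prod ν) =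
            ∫ ω in A, (Φ ω).toReal ∂μ := by
          rw [hpre, hres]
          rw [MeasureTheory.integral_prod _ (by
            exact AEAux.integrable_of_le_one hFcm.aestronglyMeasurable fun x => hΦle x.1)]
          simp
        -- RHS
        have hRHS : ∫ x in Prod.fst ⁻¹' A,
            Set.indicator (φ ⁻¹' Set.Ioi (t : ℝ)) (fun _ => (1 : ℝ)) x ∂(μ.prod ν) =
            ((μ.prod ν) ((A ×ˢ (Set.univ : Set (Set.Ioo (0 : ℝ) 1))) ∩
              {p | (t : ℝ) < φ' p})).toReal := by
          rw [hpre]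
          rw [integral_congr_ae (ae_restrict_of_ae hindφ)]
          have : (φ' ⁻¹' Set.Ioi (t : ℝ)) = {p : Ω × Set.Ioo (0 : ℝ) 1 | (t : ℝ) < φ' p} := rfl
          rw [this, setIntegral_indicator hTm, setIntegral_const, smul_eq_mul, mul_one, measureReal_def]
        rw [hLHS, hRHS]
        -- compute the product measure via sections
        have hsec : ∀ ω, ν (Prod.mk ω ⁻¹' ((A ×ˢ (Set.univ : Set (Set.Ioo (0 : ℝ) 1))) ∩
            {p | (t : ℝ) < φ' p})) = A.indicator Φ ω := by
          intro ω
          by_cases hω : ω ∈ A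
          · have : Prod.mk ω ⁻¹' ((A ×ˢ (Set.univ : Set (Set.Ioo (0 : ℝ) 1))) ∩
                {p | (t : ℝ) < φ' p}) = {s | (t : ℝ) < φ' (ω, s)} := by
              ext s; simp [hω]
            rw [this, Set.indicator_of_mem hω]
          · have : Prod.mk ω ⁻¹' ((A ×ˢ (Set.univ : Set (Set.Ioo (0 : ℝ) 1))) ∩
                {p | (t : ℝ) < φ' p}) = ∅ := by
              ext s; simp [hω]
            rw [this, Set.indicator_of_notMem hω, measure_empty]
        rw [Measure.prod_apply ((hA'.prod MeasurableSet.univ).inter hTm)]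
        simp_rw [hsec]
        rw [lintegral_indicator hA' Φ]
        rw [integral_toReal (hΦm.aemeasurable.restrict)
          (Filter.Eventually.of_forall fun ω => measure_lt_top ν _)]
      · exact ⟨fun x => (Φ x.1).toReal,
          ((hΦmV.ennreal_toReal).comp
            (comap_measurable Prod.fst)).stronglyMeasurable,
          Filter.EventuallyEq.rfl⟩
    have hcondf := compute f f' hf'meas hff'
    have hcondg := compute g g' hg'meas hgg'
    have heqprod : (fun x : Ω × Set.Ioo (0 : ℝ) 1 => (F x.1).toReal) =ᵐ[μ.prod ν]
        (fun x => (G x.1).toReal) :=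
      hcondf.trans ((hdist (Set.Ioi (t : ℝ)) measurableSet_Ioi).trans hcondg.symm)
    -- descend to μ
    have hD : MeasurableSet {ω | (F ω).toReal ≠ (G ω).toReal} :=
      (measurableSet_eq_fun hFm.ennreal_toReal hGm.ennreal_toReal).compl
    have h0 : μ {ω | (F ω).toReal ≠ (G ω).toReal} = 0 := by
      have h1 : (μ.prod ν) {x : Ω × Set.Ioo (0 : ℝ) 1 |
          ¬ (F x.1).toReal = (G x.1).toReal} = 0 := ae_iff.mp heqprod
      have h2 : {x : Ω × Set.Ioo (0 : ℝ) 1 | ¬ (F x.1).toReal = (G x.1).toReal} =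
          {ω | (F ω).toReal ≠ (G ω).toReal} ×ˢ (Set.univ : Set (Set.Ioo (0 : ℝ) 1)) := by
        ext x; simp [Set.mem_prod]
      rw [h2, Measure.prod_prod] at h1
      simpa using h1
    have hFG : ∀ᵐ ω ∂μ, (F ω).toReal = (G ω).toReal := by
      rw [ae_iff]; exact h0
    filter_upwards [hFG] with ω hω
    exact (ENNReal.toReal_eq_toReal_iff' (measure_ne_top _ _) (measure_ne_top _ _)).mp hω
  -- section comparisons
  have hsecf : ∀ᵐ ω ∂μ, ∀ᵐ s ∂ν, f (ω, s) = f' (ω, s) := Measure.ae_ae_of_ae_prod hff'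
  have hsecg : ∀ᵐ ω ∂μ, ∀ᵐ s ∂ν, g (ω, s) = g' (ω, s) := Measure.ae_ae_of_ae_prod hgg'
  have hmain : ∀ᵐ ω ∂μ, ∀ᵐ s ∂ν, f (ω, s) = g (ω, s) := by
    filter_upwards [ae_all_iff.mpr key, hsecf, hsecg] with ω hk hfs hgs
    have hqf : ∀ t : ℚ, ν {s | (t : ℝ) < f (ω, s)} = ν {s | (t : ℝ) < f' (ω, s)} := by
      intro t
      refine measure_congr (hfs.mono fun s hs => ?_)
      show ((t : ℝ) < f (ω, s)) = ((t : ℝ) < f' (ω, s))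
      rw [hs]
    have hqg : ∀ t : ℚ, ν {s | (t : ℝ) < g (ω, s)} = ν {s | (t : ℝ) < g' (ω, s)} := by
      intro t
      refine measure_congr (hgs.mono fun s hs => ?_)
      show ((t : ℝ) < g (ω, s)) = ((t : ℝ) < g' (ω, s))
      rw [hs]
    exact AEAux.antitone_ae_eq (hfmono ω) (hgmono ω)
      (fun t => (hqf t).trans ((hk t).trans (hqg t).symm))
  -- back to the product
  have hsecf'g' : ∀ᵐ ω ∂μ, ∀ᵐ s ∂ν, f' (ω, s) = g' (ω, s) := by
    filter_upwards [hmain, hsecf, hsecg] with ω h1 h2 h3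
    filter_upwards [h1, h2, h3] with s hs1 hs2 hs3
    rw [← hs2, hs1, hs3]
  have hN : MeasurableSet {p : Ω × Set.Ioo (0 : ℝ) 1 | ¬ f' p = g' p} :=
    (measurableSet_eq_fun hf'full hg'full).compl
  have h0 : (μ.prod ν) {p : Ω × Set.Ioo (0 : ℝ) 1 | ¬ f' p = g' p} = 0 := by
    rw [Measure.measure_prod_null hN]
    filter_upwards [hsecf'g'] with ω hω
    have : Prod.mk ω ⁻¹' {p : Ω × Set.Ioo (0 : ℝ) 1 | ¬ f' p = g' p} =
        {s | ¬ f' (ω, s) = g' (ω, s)} := rfl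
    rw [this]
    exact ae_iff.mp hω
  have hf'g' : f' =ᵐ[μ.prod ν] g' := by
    rw [Filter.eventuallyEq_iff_exists_mem]
    exact ⟨{p | f' p = g' p}, by rw [mem_ae_iff]; exact h0, fun p hp => hp⟩
  exact hff'.trans (hf'g'.trans hgg'.symm)

/-- Two `Lp(μ ⊗ λ)` functions that are a.e. `(V ⊗ Borel)`-measurable and
nonincreasing in the second coordinate, and which have the same conditional distribution over
`π⁻¹(V)`, must be a.e. equal. -/
theorem ae_eq_of_antitone_sameCondDist
    {Ω : Type*} {mΩ : MeasurableSpace Ω} (μ : Measure Ω) [IsProbabilityMeasure μ]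
    (p : ℝ≥0∞) (hp : 1 ≤ p) (hp' : p ≠ ⊤)
    (V : MeasurableSpace Ω) (hV : V ≤ mΩ)
    (f g : Ω × Set.Ioo (0 : ℝ) 1 → ℝ)
    (hf : MemLp f p (prodLebIoo mΩ μ)) (hg : MemLp g p (prodLebIoo mΩ μ))
    (hfV : AEStronglyMeasurable[V.prod inferInstance] f (prodLebIoo mΩ μ))
    (hgV : AEStronglyMeasurable[V.prod inferInstance] g (prodLebIoo mΩ μ))
    (hfmono : ∀ ω : Ω, Antitone fun r : Set.Ioo (0 : ℝ) 1 => f (ω, r))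
    (hgmono : ∀ ω : Ω, Antitone fun r : Set.Ioo (0 : ℝ) 1 => g (ω, r))
    (hdist : ∀ B : Set ℝ, MeasurableSet B →
      (prodLebIoo mΩ μ)[Set.indicator (f ⁻¹' B) (fun _ => (1 : ℝ)) |
          MeasurableSpace.comap Prod.fst V]
        =ᵐ[prodLebIoo mΩ μ]
          (prodLebIoo mΩ μ)[Set.indicator (g ⁻¹' B) (fun _ => (1 : ℝ)) |
            MeasurableSpace.comap Prod.fst V]) :
    f =ᵐ[prodLebIoo mΩ μ] g :=
  @main_aux Ω V mΩ μ _ hV f g hfV hgV hfmono hgmono hdist
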